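/- Over a noetherian commutative ring k, any filtered colimit of injective k-modules is injective. -/

import Mathlib

open CategoryTheory CategoryTheory.Limits

section Aux

variable {k : Type} [CommRing k]
variable {I : Type} [SmallCategory I] [IsFiltered I] (F : I ⥤ ModuleCat.{0} k)

lemma stmt7_w {i j : I} (f : i ⟶ j) (x : F.obj i) :
    colimit.ι F j (F.map f x) = colimit.ι F i x :=
  ConcreteCategory.congr_hom (colimit.w F f) x

lemma stmt7_map_comp {i j l : I} (f : i ⟶ j) (g : j ⟶ l) (x : F.obj i) :
    F.map (f ≫ g) x = F.map g (F.map f x) :=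
  ConcreteCategory.congr_hom (F.map_comp f g) x

/-- Simultaneous representation of finitely many elements of a filtered colimit. -/
lemma stmt7_aux_rep (n : ℕ) (w : Fin n → ↑(colimit F)) :
    ∃ (S : I) (y : Fin n → F.obj S), ∀ j, colimit.ι F S (y j) = w j := by
  induction n with
  | zero =>
      obtain ⟨i0⟩ := IsFiltered.nonempty (C := I)
      exact ⟨i0, Fin.elim0, fun j => j.elim0⟩
  | succ n ih =>
      obtain ⟨S, y, hy⟩ := ih (fun j => w j.castSucc)
      obtain ⟨i, z, hz⟩ := Limits.Concrete.colimit_exists_rep F (w (Fin.last n))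
      refine ⟨IsFiltered.max S i,
        Fin.lastCases (F.map (IsFiltered.rightToMax S i) z)
          (fun j' => F.map (IsFiltered.leftToMax S i) (y j')), fun j => ?_⟩
      refine Fin.lastCases ?_ (fun j' => ?_) j
      · simp only [Fin.lastCases_last]
        rw [stmt7_w]; exact hz
      · simp only [Fin.lastCases_castSucc]
        rw [stmt7_w]; exact hy j'

/-- Finitely many elements that die in the colimit die simultaneously at some stage. -/
lemma stmt7_aux_kill (S : I) (n : ℕ) (z : Fin n → F.obj S)
    (hz : ∀ t, colimit.ι F S (z t) = 0) :
    ∃ (T : I) (u : S ⟶ T), ∀ t, F.map u (z t) = 0 := by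
  induction n with
  | zero => exact ⟨S, 𝟙 S, fun t => t.elim0⟩
  | succ n ih =>
      obtain ⟨T, u, hu⟩ := ih (fun t => z t.castSucc) (fun t => hz _)
      have h0 : colimit.ι F T (F.map u (z (Fin.last n))) = 0 := by
        rw [stmt7_w]; exact hz _
      obtain ⟨T', v, hv⟩ := Limits.Concrete.colimit_rep_eq_zero (F := F) (j := T) (hx := h0)
      refine ⟨T', u ≫ v, fun t => ?_⟩
      refine Fin.lastCases ?_ (fun t' => ?_) t
      · rw [stmt7_map_comp]; exact hv
      · rw [stmt7_map_comp, hu t', map_zero]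

/-- A map from a finite module over a noetherian ring into a filtered colimit factors
through some stage. -/
lemma stmt7_aux_factor [IsNoetherianRing k] (M : Type) [AddCommGroup M] [Module k M]
    [Module.Finite k M] (g : M →ₗ[k] ↑(colimit F)) :
    ∃ (T : I) (h : M →ₗ[k] F.obj T), ∀ m, colimit.ι F T (h m) = g m := by
  obtain ⟨n, x, hx⟩ := Module.Finite.exists_fin (R := k) (M := M)
  set π : (Fin n → k) →ₗ[k] M := Fintype.linearCombination k x with hπdef
  have hπ : Function.Surjective π := by
    rw [← LinearMap.range_eq_top, hπdef, Fintype.range_linearCombination, hx]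
  set K : Submodule k (Fin n → k) := LinearMap.ker π with hK
  obtain ⟨m, r, hr⟩ := Submodule.fg_iff_exists_fin_generating_family.mp
    (IsNoetherian.noetherian K)
  obtain ⟨S, y, hy⟩ := stmt7_aux_rep F n (fun j => g (x j))
  set ψ : (Fin n → k) →ₗ[k] F.obj S := Fintype.linearCombination k y with hψdef
  have hψ : ∀ c, colimit.ι F S (ψ c) = g (π c) := by
    intro c
    rw [hψdef, hπdef, Fintype.linearCombination_apply, Fintype.linearCombination_apply,
      map_sum, map_sum]
    refine Finset.sum_congr rfl fun j _ => ?_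
    rw [map_smul, map_smul, hy]
  have hzero : ∀ t : Fin m, colimit.ι F S (ψ (r t)) = 0 := by
    intro t
    have hmem : r t ∈ K := by
      rw [← hr]; exact Submodule.subset_span ⟨t, rfl⟩
    rw [hψ, (LinearMap.mem_ker).mp hmem, map_zero]
  obtain ⟨T, u, hu⟩ := stmt7_aux_kill F S m (fun t => ψ (r t)) hzero
  set φ : (Fin n → k) →ₗ[k] F.obj T := (ConcreteCategory.hom (F.map u) : F.obj S →ₗ[k] F.obj T).comp ψ with hφdef
  have hφK : ∀ c ∈ K, φ c = 0 := by
    have : K ≤ LinearMap.ker φ := by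
      rw [← hr, Submodule.span_le]
      rintro _ ⟨t, rfl⟩
      exact hu t
    exact fun c hc => this hc
  have hconst : ∀ c c', π c = π c' → φ c = φ c' := by
    intro c c' hcc
    have : c - c' ∈ K := by
      rw [hK, LinearMap.mem_ker, map_sub, hcc, sub_self]
    have := hφK _ this
    rw [map_sub, sub_eq_zero] at this
    exact this
  set σ : M → (Fin n → k) := Function.surjInv hπ with hσdef
  have hσ : ∀ mm, π (σ mm) = mm := fun mm => Function.surjInv_eq hπ mm
  refine ⟨T, { toFun := fun mm => φ (σ mm)
               map_add' := fun a b => ?_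
               map_smul' := fun c a => ?_ }, fun mm => ?_⟩
  · rw [← map_add φ]
    exact hconst _ _ (by rw [hσ, map_add, hσ, hσ])
  · rw [RingHom.id_apply, ← map_smul φ]
    exact hconst _ _ (by rw [hσ, map_smul, hσ])
  · show colimit.ι F T (φ (σ mm)) = g mm
    rw [hφdef, LinearMap.comp_apply, stmt7_w, hψ, hσ]

end Aux

/-- Over a commutative noetherian ring `k`, any filtered
colimit of injective `k`-modules is injective. -/
theorem stmt_7 (k : Type) [CommRing k] [IsNoetherianRing k]
    (I : Type) [SmallCategory I] [IsFiltered I]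
    (F : I ⥤ ModuleCat.{0} k)
    (hinj : ∀ i : I, Injective (F.obj i)) :
    Injective (colimit F) := by
  have baer : Module.Baer k ↑(colimit F) := by
    intro J g
    haveI : Module.Finite k J := Module.Finite.iff_fg.mpr (IsNoetherian.noetherian J)
    obtain ⟨T, h, hcom⟩ := stmt7_aux_factor F (↥J) g
    haveI : Module.Injective k (F.obj T) :=
      Module.injective_module_of_injective_object k (F.obj T) (inj := hinj T)
    obtain ⟨h', hh'⟩ := Module.Injective.out J.subtype J.injective_subtype h
    refine ⟨(ConcreteCategory.hom (colimit.ι F T) : F.obj T →ₗ[k] ↑(colimit F)).comp h', fun x mem => ?_⟩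
    rw [LinearMap.comp_apply]
    have := hh' ⟨x, mem⟩
    rw [Submodule.subtype_apply] at this
    rw [this, hcom]
  have : Module.Injective k ↑(colimit F) := baer.injective
  exact Module.injective_object_of_injective_module k ↑(colimit F)
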